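/- For every integer m ≥ 2, every α ∈ ℂ and every n ∈ ℕ, the Tchebycheff m-polynomial values T_n = h_0(n·α) satisfy the recurrence h_0(α) · h_0(n·α) = (1/m) · Σ_{s=0}^{m−1} h_0((n + ω^s) · α), where ω = exp(2πi/m); i.e., with x = h_0(α), x·T_n(x) = (1/m)·Σ_{s∈Z_m} T_{n+ω^s}(x). -/

import Mathlib

open Complex Finset

/-- `ω = exp(2πi/m)`, the primitive `m`-th root of unity. -/
noncomputable def om (m : ℕ) : ℂ := Complex.exp (2 * Real.pi * Complex.I / m)

/-- The `m`-th order hyperbolic function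
`h_k(z) = (1/m) · Σ_{s=0}^{m−1} ω^{−k·s} · exp(ω^s · z)`. -/
noncomputable def hfun (m k : ℕ) (z : ℂ) : ℂ :=
  (1 / (m : ℂ)) * ∑ s ∈ Finset.range m, (om m) ^ (-((k * s : ℕ) : ℤ)) * Complex.exp ((om m) ^ s * z)

lemma om_pow_self (m : ℕ) (hm : m ≠ 0) : om m ^ m = 1 := by
  rw [om, ← Complex.exp_nat_mul, mul_div_cancel₀, Complex.exp_two_pi_mul_I]
  exact_mod_cast hm

lemma sum_shift (m : ℕ) (hm : m ≠ 0) (g : ℕ → ℂ) (hg : ∀ s, g (s + m) = g s) :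
    ∑ s ∈ range m, g (s + 1) = ∑ s ∈ range m, g s := by
  obtain ⟨M, rfl⟩ := Nat.exists_eq_succ_of_ne_zero hm
  rw [Finset.sum_range_succ, Finset.sum_range_succ']
  have := hg 0
  simp only [zero_add] at this
  rw [this, add_comm]

lemma key (m : ℕ) (hm : m ≠ 0) (α : ℂ) (t : ℕ) :
    ∑ s ∈ range m, Complex.exp (om m ^ t * om m ^ s * α)
      = ∑ s ∈ range m, Complex.exp (om m ^ s * α) := by
  induction t with
  | zero => simp
  | succ t ih =>
    have h1 : ∀ s, om m ^ (t + 1) * om m ^ s * α = om m ^ t * om m ^ (s + 1) * α := by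
      intro s; ring
    calc ∑ s ∈ range m, Complex.exp (om m ^ (t + 1) * om m ^ s * α)
        = ∑ s ∈ range m, Complex.exp (om m ^ t * om m ^ (s + 1) * α) := by
          simp_rw [h1]
      _ = ∑ s ∈ range m, Complex.exp (om m ^ t * om m ^ s * α) := by
          exact sum_shift m hm (fun s => Complex.exp (om m ^ t * om m ^ s * α))
            (fun s => by rw [pow_add, om_pow_self m hm, mul_one])
      _ = _ := ih

/-- The recurrence for the Tchebycheff `m`-polynomials `T_n = h_0(n·α)`:
`h_0(α) · h_0(n·α) = (1/m) · Σ_{s=0}^{m−1} h_0((n + ω^s)·α)`. -/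
theorem tchebycheff_recurrence (m : ℕ) (hm : 2 ≤ m) (α : ℂ) (n : ℕ) :
    hfun m 0 α * hfun m 0 (n * α) =
      (1 / (m : ℂ)) * ∑ s ∈ Finset.range m, hfun m 0 (((n : ℂ) + (om m) ^ s) * α) := by
  have hm0 : m ≠ 0 := by omega
  have hmain :
      (∑ s ∈ range m, Complex.exp (om m ^ s * α)) *
        (∑ t ∈ range m, Complex.exp (om m ^ t * ((n : ℂ) * α))) =
      ∑ s ∈ range m, ∑ t ∈ range m,
        Complex.exp (om m ^ t * (((n : ℂ) + om m ^ s) * α)) := by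
    calc (∑ s ∈ range m, Complex.exp (om m ^ s * α)) *
          (∑ t ∈ range m, Complex.exp (om m ^ t * ((n : ℂ) * α)))
        = ∑ t ∈ range m, Complex.exp (om m ^ t * ((n : ℂ) * α)) *
            ∑ s ∈ range m, Complex.exp (om m ^ s * α) := by
          rw [mul_comm, Finset.sum_mul]
      _ = ∑ t ∈ range m, Complex.exp (om m ^ t * ((n : ℂ) * α)) *
            ∑ s ∈ range m, Complex.exp (om m ^ t * om m ^ s * α) := by
          refine Finset.sum_congr rfl fun t _ => ?_
          rw [key m hm0 α t]
      _ = ∑ t ∈ range m, ∑ s ∈ range m,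
            Complex.exp (om m ^ t * (((n : ℂ) + om m ^ s) * α)) := by
          refine Finset.sum_congr rfl fun t _ => ?_
          rw [Finset.mul_sum]
          refine Finset.sum_congr rfl fun s _ => ?_
          rw [← Complex.exp_add]
          ring_nf
      _ = _ := Finset.sum_comm
  simp only [hfun, Nat.zero_mul, Nat.cast_zero, CharP.cast_eq_zero, neg_zero, zpow_zero, one_mul]
  rw [← Finset.mul_sum, ← hmain]
  ring
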